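/- Let ζ = (ζ₁,ζ₂,ζ₃) ∈ {−1,0,1}³ with ζ ≠ (0,0,0) and λ₁, λ₂, λ₃ > 0, with f and ∇ as in the context. Then f is a strictly nearly Kähler f-structure, i.e., (∇_{fX} f)(fX) = 0 for all X ∈ m but not ((∇_X f)(Y) = 0 for all X, Y ∈ m), if and only if one of the following holds: (ζ₁,ζ₂,ζ₃) = ±(1,1,1) and λ₁ = λ₂ = λ₃; (ζ₁,ζ₂,ζ₃) = ±(1,1,0) and λ₁ = λ₂; (ζ₁,ζ₂,ζ₃) = ±(1,0,1) and λ₁ = λ₃; (ζ₁,ζ₂,ζ₃) = ±(0,1,1) and λ₂ = λ₃; or (ζ₁,ζ₂,ζ₃) ∈ {±(1,0,0), ±(0,1,0), ±(0,0,1)} with λ₁, λ₂, λ₃ arbitrary. -/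

import Mathlib

open ComplexConjugate Matrix

noncomputable section

/-- The matrix D(a,b,c) ∈ su(3): zero diagonal, X₁₂ = a, X₂₁ = −conj a,
X₂₃ = b, X₃₂ = −conj b, X₁₃ = conj c, X₃₁ = −c. -/
def Dm (a b c : ℂ) : Matrix (Fin 3) (Fin 3) ℂ :=
  !![0, a, conj c; -conj a, 0, b; -c, -conj b, 0]

/-- The real Lie algebra su(3) of traceless skew-Hermitian 3×3 complex
matrices (as a set of matrices, with bracket [X,Y] = XY − YX). -/
def su3 : Set (Matrix (Fin 3) (Fin 3) ℂ) :=
  {X | Xᴴ = -X ∧ X.trace = 0}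

/-- h: the diagonal matrices in su(3). -/
def hSet : Set (Matrix (Fin 3) (Fin 3) ℂ) :=
  {X | X ∈ su3 ∧ ∀ i j, i ≠ j → X i j = 0}

/-- m = {D(a,b,c)}. -/
def mSet : Set (Matrix (Fin 3) (Fin 3) ℂ) :=
  {X | ∃ a b c : ℂ, X = Dm a b c}

/-- The three components m₁, m₂, m₃ of m. -/
def mComp : Fin 3 → Set (Matrix (Fin 3) (Fin 3) ℂ) :=
  ![{X | ∃ a : ℂ, X = Dm a 0 0}, {X | ∃ b : ℂ, X = Dm 0 b 0},
    {X | ∃ c : ℂ, X = Dm 0 0 c}]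

/-- ⟨X,Y⟩₀ = −½ Re tr(XY). -/
def inner0 (X Y : Matrix (Fin 3) (Fin 3) ℂ) : ℝ :=
  -(1 / 2) * ((X * Y).trace).re

end

noncomputable section

/-- The m-component of a matrix in su(3) = h ⊕ m (h the diagonal part):
zero out the diagonal. -/
def projm (Z : Matrix (Fin 3) (Fin 3) ℂ) : Matrix (Fin 3) (Fin 3) ℂ :=
  Z - Matrix.diagonal fun i => Z i i

/-- Projections of m onto its components m₁, m₂, m₃. -/
def mProj : Fin 3 → (Matrix (Fin 3) (Fin 3) ℂ → Matrix (Fin 3) (Fin 3) ℂ) :=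
  ![fun X => Dm (X 0 1) 0 0, fun X => Dm 0 (X 1 2) 0, fun X => Dm 0 0 (-(X 2 0))]

/-- The invariant metric g = (λ₁,λ₂,λ₃): g(X,Y) = Σ_j λ_j ⟨X_j, Y_j⟩₀ for
X, Y ∈ m, where X_j is the m_j-component; m₁, m₂, m₃ are mutually
orthogonal. -/
def gmet (lam : Fin 3 → ℝ) (X Y : Matrix (Fin 3) (Fin 3) ℂ) : ℝ :=
  ∑ j : Fin 3, lam j * inner0 (mProj j X) (mProj j Y)

end

noncomputable section

/-- The invariant f-structure with characteristic collection (ζ₁,ζ₂,ζ₃):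
f(D(a,b,c)) = D(ζ₁ia, ζ₂ib, ζ₃ic). -/
def fm (z : Fin 3 → ℝ) (X : Matrix (Fin 3) (Fin 3) ℂ) :
    Matrix (Fin 3) (Fin 3) ℂ :=
  Dm ((z 0 : ℂ) * Complex.I * X 0 1) ((z 1 : ℂ) * Complex.I * X 1 2)
    ((z 2 : ℂ) * Complex.I * (-(X 2 0)))

/-- The Nomizu function α(X,Y) = ½[X,Y]_m + U(X,Y) of the Levi-Civita
connection. -/
def alphaU (U : Matrix (Fin 3) (Fin 3) ℂ → Matrix (Fin 3) (Fin 3) ℂ →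
      Matrix (Fin 3) (Fin 3) ℂ)
    (X Y : Matrix (Fin 3) (Fin 3) ℂ) : Matrix (Fin 3) (Fin 3) ℂ :=
  (1 / 2 : ℝ) • projm ⁅X, Y⁆ + U X Y

/-- The covariant derivative (∇_X f)(Y) = α(X, fY) − f(α(X,Y)). -/
def nablaU (U : Matrix (Fin 3) (Fin 3) ℂ → Matrix (Fin 3) (Fin 3) ℂ →
      Matrix (Fin 3) (Fin 3) ℂ)
    (z : Fin 3 → ℝ) (X Y : Matrix (Fin 3) (Fin 3) ℂ) :
    Matrix (Fin 3) (Fin 3) ℂ :=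
  alphaU U X (fm z Y) - fm z (alphaU U X Y)

/-- The composition tensor T(X,Y) = ¼ f((∇_{fX} f)(fY) − (∇_{f²X} f)(f²Y)). -/
def TU (U : Matrix (Fin 3) (Fin 3) ℂ → Matrix (Fin 3) (Fin 3) ℂ →
      Matrix (Fin 3) (Fin 3) ℂ)
    (z : Fin 3 → ℝ) (X Y : Matrix (Fin 3) (Fin 3) ℂ) :
    Matrix (Fin 3) (Fin 3) ℂ :=
  (1 / 4 : ℝ) • fm z (nablaU U z (fm z X) (fm z Y) -
    nablaU U z (fm z (fm z X)) (fm z (fm z Y)))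

end


noncomputable section

lemma Dm_mem (a b c : ℂ) : Dm a b c ∈ mSet := ⟨a, b, c, rfl⟩

@[simp] lemma Dm_zero : Dm 0 0 0 = 0 := by
  ext i j
  fin_cases i <;> fin_cases j <;>
    simp [Dm, Matrix.vecHead, Matrix.vecTail]

lemma Dm_eq_zero_iff (a b c : ℂ) : Dm a b c = 0 ↔ a = 0 ∧ b = 0 ∧ c = 0 := by
  constructor
  · intro h
    refine ⟨?_, ?_, ?_⟩
    · have := congrFun (congrFun h 0) 1; simpa [Dm] using this
    · have := congrFun (congrFun h 1) 2; simpa [Dm] using this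
    · have := congrFun (congrFun h 2) 0; simpa [Dm] using this
  · rintro ⟨rfl, rfl, rfl⟩; exact Dm_zero

lemma Dm_eq {a b c a' b' c' : ℂ} (h1 : a = a') (h2 : b = b') (h3 : c = c') :
    Dm a b c = Dm a' b' c' := by rw [h1, h2, h3]

lemma Dm_add (a b c a' b' c' : ℂ) :
    Dm a b c + Dm a' b' c' = Dm (a + a') (b + b') (c + c') := by
  ext i j; fin_cases i <;> fin_cases j <;> simp [Dm] <;> ring

lemma Dm_sub (a b c a' b' c' : ℂ) :
    Dm a b c - Dm a' b' c' = Dm (a - a') (b - b') (c - c') := by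
  ext i j; fin_cases i <;> fin_cases j <;> simp [Dm] <;> ring

lemma Dm_smul (r : ℝ) (a b c : ℂ) : r • Dm a b c = Dm (r * a) (r * b) (r * c) := by
  ext i j
  fin_cases i <;> fin_cases j <;>
    simp [Dm, Complex.real_smul, _root_.map_mul, Complex.conj_ofReal] <;> ring

lemma fm_Dm (z : Fin 3 → ℝ) (a b c : ℂ) :
    fm z (Dm a b c) =
      Dm ((z 0 : ℂ) * Complex.I * a) ((z 1 : ℂ) * Complex.I * b)
        ((z 2 : ℂ) * Complex.I * c) := by
  simp [fm, Dm]

lemma projm_bracket (a b c a' b' c' : ℂ) :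
    projm ⁅Dm a b c, Dm a' b' c'⁆ =
      Dm (conj (b * c' - b' * c)) (conj (c * a' - c' * a)) (conj (a * b' - a' * b)) := by
  ext i j
  fin_cases i <;> fin_cases j <;>
    simp [projm, Dm, Ring.lie_def, Matrix.mul_apply, Fin.sum_univ_three, Matrix.diagonal] <;>
    ring

lemma gmet_Dm (lam : Fin 3 → ℝ) (a b c a' b' c' : ℂ) :
    gmet lam (Dm a b c) (Dm a' b' c') =
      lam 0 * (a * conj a').re + lam 1 * (b * conj b').re + lam 2 * (c * conj c').re := by
  simp [gmet, mProj, inner0, Fin.sum_univ_three, Dm, Matrix.trace, Matrix.mul_apply,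
    Matrix.diag, Matrix.vecHead, Matrix.vecTail, Function.comp, Complex.mul_re,
    Complex.conj_re, Complex.conj_im]
  ring

def U1c (lam : Fin 3 → ℝ) (b c b' c' : ℂ) : ℂ :=
  (((lam 2 - lam 1) / (2 * lam 0) : ℝ) : ℂ) * conj (b * c' + b' * c)
def U2c (lam : Fin 3 → ℝ) (a c a' c' : ℂ) : ℂ :=
  (((lam 0 - lam 2) / (2 * lam 1) : ℝ) : ℂ) * conj (c * a' + c' * a)
def U3c (lam : Fin 3 → ℝ) (a b a' b' : ℂ) : ℂ :=
  (((lam 1 - lam 0) / (2 * lam 2) : ℝ) : ℂ) * conj (a * b' + a' * b)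

lemma Umodel (lam : Fin 3 → ℝ) (hlam : ∀ j, 0 < lam j) (a b c a' b' c' p q r : ℂ) :
    2 * gmet lam (Dm (U1c lam b c b' c') (U2c lam a c a' c') (U3c lam a b a' b')) (Dm p q r) =
      gmet lam (Dm a b c) (projm ⁅Dm p q r, Dm a' b' c'⁆) +
        gmet lam (projm ⁅Dm p q r, Dm a b c⁆) (Dm a' b' c') := by
  have h0 := (hlam 0).ne'
  have h1 := (hlam 1).ne'
  have h2 := (hlam 2).ne'
  rw [projm_bracket, projm_bracket, gmet_Dm, gmet_Dm, gmet_Dm]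
  simp only [U1c, U2c, U3c, Complex.mul_re, Complex.mul_im, Complex.conj_re, Complex.conj_im,
    Complex.ofReal_re, Complex.ofReal_im, Complex.add_re, Complex.add_im, Complex.sub_re,
    Complex.sub_im, Complex.neg_re, Complex.neg_im]
  field_simp
  ring

lemma U_eq (lam : Fin 3 → ℝ) (hlam : ∀ j, 0 < lam j)
    (U : Matrix (Fin 3) (Fin 3) ℂ → Matrix (Fin 3) (Fin 3) ℂ → Matrix (Fin 3) (Fin 3) ℂ)
    (hUmem : ∀ X ∈ mSet, ∀ Y ∈ mSet, U X Y ∈ mSet)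
    (hUdef : ∀ X ∈ mSet, ∀ Y ∈ mSet, ∀ Z ∈ mSet,
      2 * gmet lam (U X Y) Z = gmet lam X (projm ⁅Z, Y⁆) + gmet lam (projm ⁅Z, X⁆) Y)
    (a b c a' b' c' : ℂ) :
    U (Dm a b c) (Dm a' b' c') =
      Dm (U1c lam b c b' c') (U2c lam a c a' c') (U3c lam a b a' b') := by
  obtain ⟨p, q, r, hU⟩ := hUmem _ (Dm_mem a b c) _ (Dm_mem a' b' c')
  set u1 := U1c lam b c b' c' with hu1
  set u2 := U2c lam a c a' c' with hu2
  set u3 := U3c lam a b a' b' with hu3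
  have h1 := hUdef _ (Dm_mem a b c) _ (Dm_mem a' b' c') _ (Dm_mem (p - u1) (q - u2) (r - u3))
  rw [hU] at h1
  have h2 := Umodel lam hlam a b c a' b' c' (p - u1) (q - u2) (r - u3)
  have h3 : 2 * gmet lam (Dm p q r) (Dm (p - u1) (q - u2) (r - u3)) =
      2 * gmet lam (Dm u1 u2 u3) (Dm (p - u1) (q - u2) (r - u3)) := h1.trans h2.symm
  rw [gmet_Dm, gmet_Dm] at h3
  have key : lam 0 * Complex.normSq (p - u1) + lam 1 * Complex.normSq (q - u2) +
      lam 2 * Complex.normSq (r - u3) = 0 := by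
    simp only [Complex.normSq_apply, Complex.mul_re, Complex.sub_re, Complex.sub_im,
      Complex.conj_re, Complex.conj_im] at h3 ⊢
    linear_combination h3 / 2
  have n0 := Complex.normSq_nonneg (p - u1)
  have n1 := Complex.normSq_nonneg (q - u2)
  have n2 := Complex.normSq_nonneg (r - u3)
  have l0 := hlam 0; have l1 := hlam 1; have l2 := hlam 2
  have e0 : p = u1 := sub_eq_zero.mp (Complex.normSq_eq_zero.mp (by nlinarith))
  have e1 : q = u2 := sub_eq_zero.mp (Complex.normSq_eq_zero.mp (by nlinarith))
  have e2 : r = u3 := sub_eq_zero.mp (Complex.normSq_eq_zero.mp (by nlinarith))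
  rw [hU, e0, e1, e2]

def N1c (lam z : Fin 3 → ℝ) (b c b' c' : ℂ) : ℂ :=
  -Complex.I * ((((lam 0 + lam 2 - lam 1) / (2 * lam 0) * (z 2 + z 0) : ℝ) : ℂ) * conj (b * c') +
    (((lam 2 - lam 1 - lam 0) / (2 * lam 0) * (z 1 + z 0) : ℝ) : ℂ) * conj (b' * c))
def N2c (lam z : Fin 3 → ℝ) (a c a' c' : ℂ) : ℂ :=
  -Complex.I * ((((lam 1 + lam 0 - lam 2) / (2 * lam 1) * (z 0 + z 1) : ℝ) : ℂ) * conj (c * a') +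
    (((lam 0 - lam 2 - lam 1) / (2 * lam 1) * (z 2 + z 1) : ℝ) : ℂ) * conj (c' * a))
def N3c (lam z : Fin 3 → ℝ) (a b a' b' : ℂ) : ℂ :=
  -Complex.I * ((((lam 2 + lam 1 - lam 0) / (2 * lam 2) * (z 1 + z 2) : ℝ) : ℂ) * conj (a * b') +
    (((lam 1 - lam 0 - lam 2) / (2 * lam 2) * (z 0 + z 2) : ℝ) : ℂ) * conj (a' * b))

set_option maxHeartbeats 1000000 in
lemma nabla_Dm (lam : Fin 3 → ℝ) (hlam : ∀ j, 0 < lam j) (z : Fin 3 → ℝ)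
    (U : Matrix (Fin 3) (Fin 3) ℂ → Matrix (Fin 3) (Fin 3) ℂ → Matrix (Fin 3) (Fin 3) ℂ)
    (hUeq : ∀ a b c a' b' c' : ℂ, U (Dm a b c) (Dm a' b' c') =
      Dm (U1c lam b c b' c') (U2c lam a c a' c') (U3c lam a b a' b'))
    (a b c a' b' c' : ℂ) :
    nablaU U z (Dm a b c) (Dm a' b' c') =
      Dm (N1c lam z b c b' c') (N2c lam z a c a' c') (N3c lam z a b a' b') := by
  have h0 : ((lam 0 : ℝ) : ℂ) ≠ 0 := Complex.ofReal_ne_zero.mpr (hlam 0).ne'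
  have h1 : ((lam 1 : ℝ) : ℂ) ≠ 0 := Complex.ofReal_ne_zero.mpr (hlam 1).ne'
  have h2 : ((lam 2 : ℝ) : ℂ) ≠ 0 := Complex.ofReal_ne_zero.mpr (hlam 2).ne'
  rw [nablaU, alphaU, alphaU, fm_Dm, hUeq, hUeq, projm_bracket, projm_bracket, Dm_smul, Dm_smul,
    Dm_add, Dm_add, fm_Dm, Dm_sub]
  refine Dm_eq ?_ ?_ ?_ <;>
    · simp only [U1c, U2c, U3c, N1c, N2c, N3c, _root_.map_mul, _root_.map_add, _root_.map_sub,
        Complex.conj_I, Complex.conj_ofReal, Complex.conj_conj, Complex.ofReal_div,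
        Complex.ofReal_mul, Complex.ofReal_add, Complex.ofReal_sub, Complex.ofReal_ofNat, Complex.ofReal_one]
      field_simp [h0, h1, h2]
      ring

lemma N1c_fm (lam z : Fin 3 → ℝ) (b0 c0 : ℂ) :
    N1c lam z ((z 1 : ℂ) * Complex.I * b0) ((z 2 : ℂ) * Complex.I * c0)
        ((z 1 : ℂ) * Complex.I * b0) ((z 2 : ℂ) * Complex.I * c0) =
      ((z 1 * z 2 * ((lam 0 + lam 2 - lam 1) / (2 * lam 0) * (z 2 + z 0) +
          (lam 2 - lam 1 - lam 0) / (2 * lam 0) * (z 1 + z 0)) : ℝ) : ℂ) *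
        (Complex.I * conj (b0 * c0)) := by
  simp only [N1c, _root_.map_mul, Complex.conj_I, Complex.conj_ofReal, Complex.ext_iff,
    Complex.mul_re, Complex.mul_im, Complex.add_re, Complex.add_im, Complex.neg_re,
    Complex.neg_im, Complex.I_re, Complex.I_im, Complex.ofReal_re, Complex.ofReal_im,
    Complex.conj_re, Complex.conj_im]
  constructor <;> ring

lemma N2c_fm (lam z : Fin 3 → ℝ) (a0 c0 : ℂ) :
    N2c lam z ((z 0 : ℂ) * Complex.I * a0) ((z 2 : ℂ) * Complex.I * c0)
        ((z 0 : ℂ) * Complex.I * a0) ((z 2 : ℂ) * Complex.I * c0) =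
      ((z 2 * z 0 * ((lam 1 + lam 0 - lam 2) / (2 * lam 1) * (z 0 + z 1) +
          (lam 0 - lam 2 - lam 1) / (2 * lam 1) * (z 2 + z 1)) : ℝ) : ℂ) *
        (Complex.I * conj (c0 * a0)) := by
  simp only [N2c, _root_.map_mul, Complex.conj_I, Complex.conj_ofReal, Complex.ext_iff,
    Complex.mul_re, Complex.mul_im, Complex.add_re, Complex.add_im, Complex.neg_re,
    Complex.neg_im, Complex.I_re, Complex.I_im, Complex.ofReal_re, Complex.ofReal_im,
    Complex.conj_re, Complex.conj_im]
  constructor <;> ring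

lemma N3c_fm (lam z : Fin 3 → ℝ) (a0 b0 : ℂ) :
    N3c lam z ((z 0 : ℂ) * Complex.I * a0) ((z 1 : ℂ) * Complex.I * b0)
        ((z 0 : ℂ) * Complex.I * a0) ((z 1 : ℂ) * Complex.I * b0) =
      ((z 0 * z 1 * ((lam 2 + lam 1 - lam 0) / (2 * lam 2) * (z 1 + z 2) +
          (lam 1 - lam 0 - lam 2) / (2 * lam 2) * (z 0 + z 2)) : ℝ) : ℂ) *
        (Complex.I * conj (a0 * b0)) := by
  simp only [N3c, _root_.map_mul, Complex.conj_I, Complex.conj_ofReal, Complex.ext_iff,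
    Complex.mul_re, Complex.mul_im, Complex.add_re, Complex.add_im, Complex.neg_re,
    Complex.neg_im, Complex.I_re, Complex.I_im, Complex.ofReal_re, Complex.ofReal_im,
    Complex.conj_re, Complex.conj_im]
  constructor <;> ring

lemma divc1 (l u p q r t : ℝ) (hl : l ≠ 0) :
    u * (p / (2 * l) * q + r / (2 * l) * t) = 0 ↔ u * (p * q + r * t) = 0 := by
  have h2l : (2 : ℝ) * l ≠ 0 := mul_ne_zero two_ne_zero hl
  rw [show u * (p / (2 * l) * q + r / (2 * l) * t) = u * (p * q + r * t) / (2 * l) by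
    ring, div_eq_zero_iff, or_iff_left h2l]

lemma divc2 (l p q : ℝ) (hl : l ≠ 0) : p / (2 * l) * q = 0 ↔ p * q = 0 := by
  have h2l : (2 : ℝ) * l ≠ 0 := mul_ne_zero two_ne_zero hl
  rw [show p / (2 * l) * q = p * q / (2 * l) by ring, div_eq_zero_iff, or_iff_left h2l]

end


noncomputable section

lemma NK_iff (lam : Fin 3 → ℝ) (hlam : ∀ j, 0 < lam j) (z : Fin 3 → ℝ)
    (U : Matrix (Fin 3) (Fin 3) ℂ → Matrix (Fin 3) (Fin 3) ℂ → Matrix (Fin 3) (Fin 3) ℂ)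
    (hUeq : ∀ a b c a' b' c' : ℂ, U (Dm a b c) (Dm a' b' c') =
      Dm (U1c lam b c b' c') (U2c lam a c a' c') (U3c lam a b a' b')) :
    (∀ X ∈ mSet, nablaU U z (fm z X) (fm z X) = 0) ↔
      (z 1 * z 2 * ((lam 0 + lam 2 - lam 1) * (z 2 + z 0) +
          (lam 2 - lam 1 - lam 0) * (z 1 + z 0)) = 0 ∧
       z 2 * z 0 * ((lam 1 + lam 0 - lam 2) * (z 0 + z 1) +
          (lam 0 - lam 2 - lam 1) * (z 2 + z 1)) = 0 ∧
       z 0 * z 1 * ((lam 2 + lam 1 - lam 0) * (z 1 + z 2) +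
          (lam 1 - lam 0 - lam 2) * (z 0 + z 2)) = 0) := by
  constructor
  · intro h
    have h1 := h (Dm 1 1 1) (Dm_mem 1 1 1)
    rw [fm_Dm, nabla_Dm lam hlam z U hUeq, N1c_fm, N2c_fm, N3c_fm, Dm_eq_zero_iff] at h1
    obtain ⟨ha, hb, hc⟩ := h1
    refine ⟨?_, ?_, ?_⟩
    · refine (divc1 (lam 0) _ _ _ _ _ (hlam 0).ne').mp ?_
      have := mul_eq_zero.mp ha
      rcases this with h' | h'
      · exact_mod_cast h'
      · exfalso; simpa [Complex.ext_iff] using h'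
    · refine (divc1 (lam 1) _ _ _ _ _ (hlam 1).ne').mp ?_
      have := mul_eq_zero.mp hb
      rcases this with h' | h'
      · exact_mod_cast h'
      · exfalso; simpa [Complex.ext_iff] using h'
    · refine (divc1 (lam 2) _ _ _ _ _ (hlam 2).ne').mp ?_
      have := mul_eq_zero.mp hc
      rcases this with h' | h'
      · exact_mod_cast h'
      · exfalso; simpa [Complex.ext_iff] using h'
  · rintro ⟨h1, h2, h3⟩ X hX
    obtain ⟨a, b, c, rfl⟩ := hX
    rw [fm_Dm, nabla_Dm lam hlam z U hUeq, N1c_fm, N2c_fm, N3c_fm,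
      (divc1 (lam 0) _ _ _ _ _ (hlam 0).ne').mpr h1,
      (divc1 (lam 1) _ _ _ _ _ (hlam 1).ne').mpr h2,
      (divc1 (lam 2) _ _ _ _ _ (hlam 2).ne').mpr h3]
    simp

lemma Flat_iff (lam : Fin 3 → ℝ) (hlam : ∀ j, 0 < lam j) (z : Fin 3 → ℝ)
    (U : Matrix (Fin 3) (Fin 3) ℂ → Matrix (Fin 3) (Fin 3) ℂ → Matrix (Fin 3) (Fin 3) ℂ)
    (hUeq : ∀ a b c a' b' c' : ℂ, U (Dm a b c) (Dm a' b' c') =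
      Dm (U1c lam b c b' c') (U2c lam a c a' c') (U3c lam a b a' b')) :
    (∀ X ∈ mSet, ∀ Y ∈ mSet, nablaU U z X Y = 0) ↔
      ((lam 0 + lam 2 - lam 1) * (z 2 + z 0) = 0 ∧
       (lam 2 - lam 1 - lam 0) * (z 1 + z 0) = 0 ∧
       (lam 1 + lam 0 - lam 2) * (z 0 + z 1) = 0 ∧
       (lam 0 - lam 2 - lam 1) * (z 2 + z 1) = 0 ∧
       (lam 2 + lam 1 - lam 0) * (z 1 + z 2) = 0 ∧
       (lam 1 - lam 0 - lam 2) * (z 0 + z 2) = 0) := by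
  constructor
  · intro h
    have A1 := h (Dm 0 1 0) (Dm_mem _ _ _) (Dm 0 0 1) (Dm_mem _ _ _)
    have A2 := h (Dm 0 0 1) (Dm_mem _ _ _) (Dm 0 1 0) (Dm_mem _ _ _)
    have A3 := h (Dm 0 0 1) (Dm_mem _ _ _) (Dm 1 0 0) (Dm_mem _ _ _)
    have A4 := h (Dm 1 0 0) (Dm_mem _ _ _) (Dm 0 0 1) (Dm_mem _ _ _)
    have A5 := h (Dm 1 0 0) (Dm_mem _ _ _) (Dm 0 1 0) (Dm_mem _ _ _)
    have A6 := h (Dm 0 1 0) (Dm_mem _ _ _) (Dm 1 0 0) (Dm_mem _ _ _)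
    rw [nabla_Dm lam hlam z U hUeq, Dm_eq_zero_iff] at A1 A2 A3 A4 A5 A6
    refine ⟨(divc2 (lam 0) _ _ (hlam 0).ne').mp ?_, (divc2 (lam 0) _ _ (hlam 0).ne').mp ?_,
      (divc2 (lam 1) _ _ (hlam 1).ne').mp ?_, (divc2 (lam 1) _ _ (hlam 1).ne').mp ?_,
      (divc2 (lam 2) _ _ (hlam 2).ne').mp ?_, (divc2 (lam 2) _ _ (hlam 2).ne').mp ?_⟩
    · simpa [N1c, Complex.ext_iff] using A1.1
    · simpa [N1c, Complex.ext_iff] using A2.1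
    · simpa [N2c, Complex.ext_iff] using A3.2.1
    · simpa [N2c, Complex.ext_iff] using A4.2.1
    · simpa [N3c, Complex.ext_iff] using A5.2.2
    · simpa [N3c, Complex.ext_iff] using A6.2.2
  · rintro ⟨p1, p2, p3, p4, p5, p6⟩ X hX Y hY
    obtain ⟨a, b, c, rfl⟩ := hX
    obtain ⟨a', b', c', rfl⟩ := hY
    rw [nabla_Dm lam hlam z U hUeq]
    have q1 := (divc2 (lam 0) _ _ (hlam 0).ne').mpr p1
    have q2 := (divc2 (lam 0) _ _ (hlam 0).ne').mpr p2
    have q3 := (divc2 (lam 1) _ _ (hlam 1).ne').mpr p3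
    have q4 := (divc2 (lam 1) _ _ (hlam 1).ne').mpr p4
    have q5 := (divc2 (lam 2) _ _ (hlam 2).ne').mpr p5
    have q6 := (divc2 (lam 2) _ _ (hlam 2).ne').mpr p6
    simp [N1c, N2c, N3c, q1, q2, q3, q4, q5, q6]

set_option maxHeartbeats 2000000 in
lemma final_algebra (l0 l1 l2 z0 z1 z2 : ℝ)
    (hl0 : 0 < l0) (hl1 : 0 < l1) (hl2 : 0 < l2)
    (h0 : z0 = -1 ∨ z0 = 0 ∨ z0 = 1) (h1 : z1 = -1 ∨ z1 = 0 ∨ z1 = 1)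
    (h2 : z2 = -1 ∨ z2 = 0 ∨ z2 = 1) (hnz : ¬(z0 = 0 ∧ z1 = 0 ∧ z2 = 0)) :
    ((z1 * z2 * ((l0 + l2 - l1) * (z2 + z0) + (l2 - l1 - l0) * (z1 + z0)) = 0 ∧
      z2 * z0 * ((l1 + l0 - l2) * (z0 + z1) + (l0 - l2 - l1) * (z2 + z1)) = 0 ∧
      z0 * z1 * ((l2 + l1 - l0) * (z1 + z2) + (l1 - l0 - l2) * (z0 + z2)) = 0) ∧
     ¬((l0 + l2 - l1) * (z2 + z0) = 0 ∧ (l2 - l1 - l0) * (z1 + z0) = 0 ∧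
       (l1 + l0 - l2) * (z0 + z1) = 0 ∧ (l0 - l2 - l1) * (z2 + z1) = 0 ∧
       (l2 + l1 - l0) * (z1 + z2) = 0 ∧ (l1 - l0 - l2) * (z0 + z2) = 0)) ↔
    ((((z0 = 1 ∧ z1 = 1 ∧ z2 = 1) ∨ (z0 = -1 ∧ z1 = -1 ∧ z2 = -1)) ∧ l0 = l1 ∧ l1 = l2) ∨
     ((((z0 = 1 ∧ z1 = 1 ∧ z2 = 0) ∨ (z0 = -1 ∧ z1 = -1 ∧ z2 = 0)) ∧ l0 = l1)) ∨
     ((((z0 = 1 ∧ z1 = 0 ∧ z2 = 1) ∨ (z0 = -1 ∧ z1 = 0 ∧ z2 = -1)) ∧ l0 = l2)) ∨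
     ((((z0 = 0 ∧ z1 = 1 ∧ z2 = 1) ∨ (z0 = 0 ∧ z1 = -1 ∧ z2 = -1)) ∧ l1 = l2)) ∨
     ((z0 = 1 ∧ z1 = 0 ∧ z2 = 0) ∨ (z0 = -1 ∧ z1 = 0 ∧ z2 = 0) ∨
      (z0 = 0 ∧ z1 = 1 ∧ z2 = 0) ∨ (z0 = 0 ∧ z1 = -1 ∧ z2 = 0) ∨
      (z0 = 0 ∧ z1 = 0 ∧ z2 = 1) ∨ (z0 = 0 ∧ z1 = 0 ∧ z2 = -1))) := by
  rcases h0 with rfl|rfl|rfl <;> rcases h1 with rfl|rfl|rfl <;> rcases h2 with rfl|rfl|rfl <;>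
    try norm_num at hnz
  all_goals constructor
  all_goals try (rintro ⟨⟨e1, e2, e3⟩, hnf⟩
                 norm_num
                 all_goals first
                   | exact absurd ⟨by linarith, by linarith, by linarith, by linarith,
                       by linarith, by linarith⟩ hnf
                   | linarith
                   | constructor <;> linarith)
  all_goals intro h
  all_goals try norm_num at h
  all_goals first
    | (obtain ⟨ha, hb⟩ := h
       exact ⟨⟨by linarith, by linarith, by linarith⟩,
         by rintro ⟨p1, p2, p3, p4, p5, p6⟩; linarith⟩)
    | exact ⟨⟨by linarith, by linarith, by linarith⟩,
        by rintro ⟨p1, p2, p3, p4, p5, p6⟩; linarith⟩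
    | exact ⟨⟨by norm_num, by norm_num, by norm_num⟩,
        by rintro ⟨p1, p2, p3, p4, p5, p6⟩; linarith⟩

end

/-- Invariant strictly nearly Kähler f-structures on the flag manifold
SU(3)/T_max: (∇_{fX} f)(fX) = 0 for all X but ∇f ≠ 0 holds exactly for
±(1,1,1) with λ₁ = λ₂ = λ₃; ±(1,1,0) with λ₁ = λ₂; ±(1,0,1) with λ₁ = λ₃;
±(0,1,1) with λ₂ = λ₃; and the rank-2 structures ±(1,0,0), ±(0,1,0),
±(0,0,1) for every metric. -/
theorem stmt_12 (z : Fin 3 → ℝ) (hz : ∀ j, z j = -1 ∨ z j = 0 ∨ z j = 1)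
    (hz0 : ¬(z 0 = 0 ∧ z 1 = 0 ∧ z 2 = 0))
    (lam : Fin 3 → ℝ) (hlam : ∀ j, 0 < lam j)
    (U : Matrix (Fin 3) (Fin 3) ℂ → Matrix (Fin 3) (Fin 3) ℂ →
      Matrix (Fin 3) (Fin 3) ℂ)
    (hUmem : ∀ X ∈ mSet, ∀ Y ∈ mSet, U X Y ∈ mSet)
    (hUsymm : ∀ X ∈ mSet, ∀ Y ∈ mSet, U X Y = U Y X)
    (hUdef : ∀ X ∈ mSet, ∀ Y ∈ mSet, ∀ Z ∈ mSet,
      2 * gmet lam (U X Y) Z =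
        gmet lam X (projm ⁅Z, Y⁆) + gmet lam (projm ⁅Z, X⁆) Y) :
    ((∀ X ∈ mSet, nablaU U z (fm z X) (fm z X) = 0) ∧
        ¬(∀ X ∈ mSet, ∀ Y ∈ mSet, nablaU U z X Y = 0)) ↔
      ((((z 0 = 1 ∧ z 1 = 1 ∧ z 2 = 1) ∨ (z 0 = -1 ∧ z 1 = -1 ∧ z 2 = -1)) ∧
          lam 0 = lam 1 ∧ lam 1 = lam 2) ∨
      ((((z 0 = 1 ∧ z 1 = 1 ∧ z 2 = 0) ∨ (z 0 = -1 ∧ z 1 = -1 ∧ z 2 = 0)) ∧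
          lam 0 = lam 1)) ∨
      ((((z 0 = 1 ∧ z 1 = 0 ∧ z 2 = 1) ∨ (z 0 = -1 ∧ z 1 = 0 ∧ z 2 = -1)) ∧
          lam 0 = lam 2)) ∨
      ((((z 0 = 0 ∧ z 1 = 1 ∧ z 2 = 1) ∨ (z 0 = 0 ∧ z 1 = -1 ∧ z 2 = -1)) ∧
          lam 1 = lam 2)) ∨
      ((z 0 = 1 ∧ z 1 = 0 ∧ z 2 = 0) ∨ (z 0 = -1 ∧ z 1 = 0 ∧ z 2 = 0) ∨
        (z 0 = 0 ∧ z 1 = 1 ∧ z 2 = 0) ∨ (z 0 = 0 ∧ z 1 = -1 ∧ z 2 = 0) ∨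
        (z 0 = 0 ∧ z 1 = 0 ∧ z 2 = 1) ∨ (z 0 = 0 ∧ z 1 = 0 ∧ z 2 = -1))) := by
  have hUeq := U_eq lam hlam U hUmem hUdef
  rw [NK_iff lam hlam z U hUeq, Flat_iff lam hlam z U hUeq]
  exact final_algebra (lam 0) (lam 1) (lam 2) (z 0) (z 1) (z 2)
    (hlam 0) (hlam 1) (hlam 2) (hz 0) (hz 1) (hz 2) hz0
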